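/- arXiv:2305.09701 — 2 statements merged into one kernel-verified Lean document; each statement's English description precedes it below -/
import Mathlib

section
/- Let α ≥ 0, δ > 0, x ≥ 0, and let g be a real-valued function on [0,∞) belonging to B_{ρα}(ℝ₊). Let L be a linear functional on the space of real-valued functions on [0,∞) which is positive (L f ≥ 0 whenever f(y) ≥ 0 for all y ≥ 0) and satisfies L(1) = 1. Then |L(g) − g(x)| ≤ √(L(μ_{x,α}²)) · (1 + (1/δ)·√(L(φ_x²))) · ω_{ρα}(g; δ), where μ_{x,α}(y) = 1 + (x + |y − x|)^{2+α} and φ_x(y) = |y − x| for y ≥ 0. -/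
/-- A function `g` belongs to the weighted space `B_{ρα}(ℝ₊)` if
`|g(x)| ≤ N(1 + x^{2+α})` for all `x ≥ 0`, for some constant `N ≥ 0`. -/
def MemBRho (α : ℝ) (g : ℝ → ℝ) : Prop :=
  ∃ N : ℝ, 0 ≤ N ∧ ∀ x : ℝ, 0 ≤ x → |g x| ≤ N * (1 + x ^ (2 + α))

/-- The weighted modulus of smoothness
`ω_{ρα}(g; δ) = sup { |g(x+i) − g(x)| / (1 + (x+i)^{2+α}) : x ≥ 0, 0 < i < δ }`. -/
noncomputable def omegaRho (α : ℝ) (g : ℝ → ℝ) (δ : ℝ) : ℝ :=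
  sSup {r : ℝ | ∃ x : ℝ, 0 ≤ x ∧ ∃ i : ℝ, 0 < i ∧ i < δ ∧
    r = |g (x + i) - g x| / (1 + (x + i) ^ (2 + α))}

private lemma omega_bddAbove {α : ℝ} (hα : 0 ≤ α) {g : ℝ → ℝ} (hg : MemBRho α g) (δ : ℝ) :
    BddAbove {r : ℝ | ∃ x : ℝ, 0 ≤ x ∧ ∃ i : ℝ, 0 < i ∧ i < δ ∧
      r = |g (x + i) - g x| / (1 + (x + i) ^ (2 + α))} := by
  obtain ⟨N, hN0, hN⟩ := hg
  refine ⟨2 * N, ?_⟩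
  rintro r ⟨x, hx, i, hi0, hiδ, rfl⟩
  have hxi : (0:ℝ) ≤ x + i := by linarith
  have hp : 0 ≤ (x + i) ^ (2 + α) := Real.rpow_nonneg hxi _
  have hpos : 0 < 1 + (x + i) ^ (2 + α) := by linarith
  rw [div_le_iff₀ hpos]
  have h1 : |g (x + i) - g x| ≤ |g (x + i)| + |g x| := abs_sub _ _
  have h2 : x ^ (2 + α) ≤ (x + i) ^ (2 + α) :=
    Real.rpow_le_rpow hx (by linarith) (by linarith)
  have h3 := hN (x + i) hxi
  have h4 := hN x hx
  nlinarith

private lemma omega_nonneg {α : ℝ} (hα : 0 ≤ α) {g : ℝ → ℝ} (hg : MemBRho α g)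
    {δ : ℝ} (hδ : 0 < δ) : 0 ≤ omegaRho α g δ := by
  have hmem : |g (0 + δ/2) - g 0| / (1 + (0 + δ/2) ^ (2 + α)) ∈
      {r : ℝ | ∃ x : ℝ, 0 ≤ x ∧ ∃ i : ℝ, 0 < i ∧ i < δ ∧
        r = |g (x + i) - g x| / (1 + (x + i) ^ (2 + α))} :=
    ⟨0, le_refl 0, δ/2, by linarith, by linarith, rfl⟩
  have hle := le_csSup (omega_bddAbove hα hg δ) hmem
  have hp : 0 ≤ (0 + δ/2 : ℝ) ^ (2 + α) := Real.rpow_nonneg (by linarith) _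
  have h0 : 0 ≤ |g (0 + δ/2) - g 0| / (1 + (0 + δ/2) ^ (2 + α)) :=
    div_nonneg (abs_nonneg _) (by linarith)
  exact le_trans h0 hle

private lemma omega_step {α : ℝ} (hα : 0 ≤ α) {g : ℝ → ℝ} (hg : MemBRho α g)
    {δ : ℝ} (hδ : 0 < δ) {a h : ℝ} (ha : 0 ≤ a) (h0 : 0 < h) (hhδ : h < δ) :
    |g (a + h) - g a| ≤ (1 + (a + h) ^ (2 + α)) * omegaRho α g δ := by
  have hmem : |g (a + h) - g a| / (1 + (a + h) ^ (2 + α)) ∈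
      {r : ℝ | ∃ x : ℝ, 0 ≤ x ∧ ∃ i : ℝ, 0 < i ∧ i < δ ∧
        r = |g (x + i) - g x| / (1 + (x + i) ^ (2 + α))} :=
    ⟨a, ha, h, h0, hhδ, rfl⟩
  have hle := le_csSup (omega_bddAbove hα hg δ) hmem
  have hp : 0 ≤ (a + h) ^ (2 + α) := Real.rpow_nonneg (by linarith) _
  have hpos : 0 < 1 + (a + h) ^ (2 + α) := by linarith
  rw [div_le_iff₀ hpos] at hle
  rw [mul_comm]
  exact hle

private lemma omega_steps {α : ℝ} (hα : 0 ≤ α) {g : ℝ → ℝ} (hg : MemBRho α g)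
    {δ : ℝ} (hδ : 0 < δ) {h : ℝ} (h0 : 0 < h) (hhδ : h < δ) :
    ∀ n : ℕ, ∀ a : ℝ, 0 ≤ a →
      |g (a + n * h) - g a| ≤ n * (1 + (a + n * h) ^ (2 + α)) * omegaRho α g δ := by
  intro n
  induction n with
  | zero => intro a ha; simp
  | succ n ih =>
    intro a ha
    have hω := omega_nonneg hα hg hδ
    push_cast
    have hab : a + ((n:ℝ)+1) * h = a + (n:ℝ) * h + h := by ring
    have hna : (0:ℝ) ≤ a + (n:ℝ) * h := by positivity
    have key : |g (a + ((n:ℝ)+1) * h) - g a| ≤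
        |g (a + (n:ℝ) * h + h) - g (a + (n:ℝ) * h)| + |g (a + (n:ℝ) * h) - g a| := by
      rw [hab]; exact abs_sub_le _ _ _
    have h1 := omega_step hα hg hδ hna h0 hhδ
    rw [show a + (n:ℝ) * h + h = a + ((n:ℝ)+1) * h by ring] at h1
    have h2 := ih a ha
    have hQ : (a + (n:ℝ) * h) ^ (2 + α) ≤ (a + ((n:ℝ)+1) * h) ^ (2 + α) :=
      Real.rpow_le_rpow (by positivity) (by linarith) (by linarith)
    have e1 := mul_le_mul_of_nonneg_right hQ hω
    have e2 := mul_le_mul_of_nonneg_left e1 (show (0:ℝ) ≤ (n:ℝ) from Nat.cast_nonneg n)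
    rw [show a + (n:ℝ) * h + h = a + ((n:ℝ)+1) * h by ring] at key
    nlinarith [key, h1, h2, e1, e2]

private lemma pointwise_bound {α : ℝ} (hα : 0 ≤ α) {g : ℝ → ℝ} (hg : MemBRho α g)
    {δ : ℝ} (hδ : 0 < δ) {x : ℝ} (hx : 0 ≤ x) {y : ℝ} (hy : 0 ≤ y) :
    |g y - g x| ≤ (1 + (x + |y - x|) ^ (2 + α)) * (1 + |y - x| / δ) * omegaRho α g δ := by
  have hω := omega_nonneg hα hg hδ
  set i := |y - x| with hi
  have hi0 : 0 ≤ i := abs_nonneg _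
  have hxi : (0:ℝ) ≤ x + i := by positivity
  have hrp : 0 ≤ (x + i) ^ (2 + α) := Real.rpow_nonneg hxi _
  rcases eq_or_lt_of_le hi0 with h0 | h0
  · have hyx : y = x := by
      have := abs_eq_zero.mp (hi ▸ h0.symm); linarith
    rw [hyx]
    simp only [sub_self, abs_zero]
    positivity
  · set a := min x y with hadef
    set b := max x y with hbdef
    have ha0 : 0 ≤ a := le_min hx hy
    have hab : b = a + i := by
      rcases le_total x y with hle | hle
      · have h1 : a = x := min_eq_left hle
        have h2 : b = y := max_eq_right hle
        have h3 : |y - x| = y - x := abs_of_nonneg (by linarith)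
        linarith [hi, h3]
      · have h1 : a = y := min_eq_right hle
        have h2 : b = x := max_eq_left hle
        have h3 : |y - x| = x - y := by rw [abs_sub_comm]; exact abs_of_nonneg (by linarith)
        linarith [hi, h3]
    have hb_le : b ≤ x + i := by
      rcases le_total x y with hle | hle
      · have h2 : b = y := max_eq_right hle
        have h3 : |y - x| = y - x := abs_of_nonneg (by linarith)
        linarith
      · have h2 : b = x := max_eq_left hle
        linarith
    set n : ℕ := Nat.floor (i / δ) + 1 with hn
    have hn0 : 0 < (n:ℝ) := by positivity
    set h : ℝ := i / n with hhdef
    have hh0 : 0 < h := div_pos h0 hn0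
    have hhδ : h < δ := by
      rw [hhdef, div_lt_iff₀ hn0]
      have h1 : i / δ < (n:ℝ) := by
        rw [hn]; push_cast; exact Nat.lt_floor_add_one _
      calc i = (i / δ) * δ := by field_simp
        _ < (n:ℝ) * δ := mul_lt_mul_of_pos_right h1 hδ
        _ = δ * n := by ring
    have hnh : (n:ℝ) * h = i := by rw [hhdef]; field_simp
    have hsteps := omega_steps hα hg hδ hh0 hhδ n a ha0
    rw [hnh] at hsteps
    have hgba : |g y - g x| = |g (a + i) - g a| := by
      rcases le_total x y with hle | hle
      · have hay : a = x := min_eq_left hle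
        have hby : b = y := max_eq_right hle
        rw [← hab, hby, hay]
      · have hay : a = y := min_eq_right hle
        have hby : b = x := max_eq_left hle
        rw [← hab, hby, hay, abs_sub_comm]
    rw [hgba]
    have hnle : (n:ℝ) ≤ 1 + i / δ := by
      rw [hn]; push_cast
      have := Nat.floor_le (show (0:ℝ) ≤ i / δ by positivity)
      linarith
    have hmono : (a + i) ^ (2 + α) ≤ (x + i) ^ (2 + α) := by
      apply Real.rpow_le_rpow (by positivity) (by rw [← hab]; exact hb_le) (by linarith)
    calc |g (a + i) - g a| ≤ n * (1 + (a + i) ^ (2 + α)) * omegaRho α g δ := hsteps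
      _ ≤ (1 + i / δ) * (1 + (x + i) ^ (2 + α)) * omegaRho α g δ := by
          apply mul_le_mul_of_nonneg_right _ hω
          have hr : 0 ≤ (a + i) ^ (2 + α) := Real.rpow_nonneg (by positivity) _
          apply mul_le_mul hnle (by linarith) (by linarith) (by positivity)
      _ = (1 + (x + i) ^ (2 + α)) * (1 + i / δ) * omegaRho α g δ := by ring

private lemma cauchy_schwarz (L : (ℝ → ℝ) →ₗ[ℝ] ℝ)
    (hLpos : ∀ f : ℝ → ℝ, (∀ y : ℝ, 0 ≤ y → 0 ≤ f y) → 0 ≤ L f) (u v : ℝ → ℝ) :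
    L (fun y => u y * v y) ≤
      Real.sqrt (L (fun y => u y ^ (2 : ℕ))) * Real.sqrt (L (fun y => v y ^ (2 : ℕ))) := by
  set A := L (fun y => u y ^ (2:ℕ)) with hA
  set B := L (fun y => v y ^ (2:ℕ)) with hB2
  set C := L (fun y => u y * v y) with hC
  have hA0 : 0 ≤ A := hLpos _ (fun y _ => sq_nonneg _)
  have hB0 : 0 ≤ B := hLpos _ (fun y _ => sq_nonneg _)
  have hq : ∀ t : ℝ, 0 ≤ B * (t * t) + (-(2*C)) * t + A := by
    intro t
    have hfun : (fun y => (u y - t * v y) ^ (2:ℕ)) =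
        (fun y => u y ^ (2:ℕ)) + (-(2*t)) • (fun y => u y * v y) + (t*t) • (fun y => v y ^ (2:ℕ)) := by
      funext y
      simp only [Pi.add_apply, Pi.smul_apply, smul_eq_mul]
      ring
    have hpos := hLpos _ (fun y _ => sq_nonneg (u y - t * v y))
    rw [hfun, map_add, map_add, map_smul, map_smul, smul_eq_mul, smul_eq_mul] at hpos
    rw [← hA, ← hB2, ← hC] at hpos
    nlinarith [hpos]
  have hdisc : discrim B (-(2*C)) A ≤ 0 := discrim_le_zero hq
  rw [discrim] at hdisc
  have hCsq : C ^ 2 ≤ A * B := by nlinarith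
  have h1 : C ≤ Real.sqrt (A * B) := by
    have h2 := Real.sqrt_le_sqrt hCsq
    rw [Real.sqrt_sq_eq_abs] at h2
    exact le_trans (le_abs_self C) h2
  rwa [Real.sqrt_mul hA0] at h1

/-- Error estimate of a positive, unital linear functional `L` on an unbounded
function `g ∈ B_{ρα}(ℝ₊)` via the weighted modulus of smoothness:
`|L(g) − g(x)| ≤ √(L(μ_{x,α}²)) · (1 + (1/δ)·√(L(φ_x²))) · ω_{ρα}(g; δ)`,
where `μ_{x,α}(y) = 1 + (x + |y − x|)^{2+α}` and `φ_x(y) = |y − x|`. -/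
theorem positive_functional_estimate (α : ℝ) (hα : 0 ≤ α) (δ : ℝ) (hδ : 0 < δ)
    (x : ℝ) (hx : 0 ≤ x) (g : ℝ → ℝ) (hg : MemBRho α g)
    (L : (ℝ → ℝ) →ₗ[ℝ] ℝ)
    (hLpos : ∀ f : ℝ → ℝ, (∀ y : ℝ, 0 ≤ y → 0 ≤ f y) → 0 ≤ L f)
    (hL1 : L (fun _ => 1) = 1) :
    |L g - g x| ≤
      Real.sqrt (L (fun y => (1 + (x + |y - x|) ^ (2 + α)) ^ (2 : ℕ))) *
        (1 + (1 / δ) * Real.sqrt (L (fun y => |y - x| ^ (2 : ℕ)))) * omegaRho α g δ := by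
  have hω := omega_nonneg hα hg hδ
  set ω := omegaRho α g δ with hωdef
  set μ : ℝ → ℝ := fun y => 1 + (x + |y - x|) ^ (2 + α) with hμ
  set φ : ℝ → ℝ := fun y => |y - x| with hφ
  set SA := Real.sqrt (L (fun y => μ y ^ (2:ℕ))) with hSA
  set SB := Real.sqrt (L (fun y => φ y ^ (2:ℕ))) with hSB
  set F : ℝ → ℝ := fun y => μ y * (1 + φ y / δ) * ω with hF
  have hptw : ∀ y : ℝ, 0 ≤ y → |g y - g x| ≤ F y := fun y hy =>
    pointwise_bound hα hg hδ hx hy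
  set h₀ : ℝ → ℝ := fun y => g y - g x with hh₀
  have hLh : L h₀ = L g - g x := by
    have heq : h₀ = g - (g x) • (fun _ : ℝ => (1:ℝ)) := by
      funext y
      simp [hh₀, smul_eq_mul]
    rw [heq, map_sub, map_smul, hL1, smul_eq_mul, mul_one]
  have hub := hLpos (F - h₀) (fun y hy => by
    simp only [Pi.sub_apply, hh₀]
    linarith [le_of_abs_le (hptw y hy)])
  have hlb := hLpos (F + h₀) (fun y hy => by
    simp only [Pi.add_apply, hh₀]
    linarith [neg_le_of_abs_le (hptw y hy)])
  rw [map_sub] at hub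
  rw [map_add] at hlb
  have habs : |L g - g x| ≤ L F := by
    rw [← hLh]
    exact abs_le.mpr ⟨by linarith, by linarith⟩
  have hFsplit : F = ω • (μ + δ⁻¹ • (fun y => μ y * φ y)) := by
    funext y
    simp only [hF, Pi.smul_apply, Pi.add_apply, smul_eq_mul]
    ring
  have hLF : L F = ω * (L μ + δ⁻¹ * L (fun y => μ y * φ y)) := by
    rw [hFsplit, map_smul, map_add, map_smul, smul_eq_mul, smul_eq_mul]
  have hCS1 : L μ ≤ SA := by
    have h := cauchy_schwarz L hLpos μ (fun _ : ℝ => (1:ℝ))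
    have h1 : (fun y => μ y * (1:ℝ)) = μ := by funext y; simp
    have h2 : (fun (_ : ℝ) => ((1:ℝ)) ^ (2:ℕ)) = (fun _ : ℝ => (1:ℝ)) := by
      funext y; simp
    rw [h1, h2, hL1, Real.sqrt_one, mul_one] at h
    exact h
  have hCS2 : L (fun y => μ y * φ y) ≤ SA * SB := cauchy_schwarz L hLpos μ φ
  have hSA0 : 0 ≤ SA := Real.sqrt_nonneg _
  have hSB0 : 0 ≤ SB := Real.sqrt_nonneg _
  have hδinv : (0:ℝ) ≤ δ⁻¹ := by positivity
  have hfinal : L F ≤ SA * (1 + (1/δ) * SB) * ω := by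
    rw [hLF]
    have hsum : L μ + δ⁻¹ * L (fun y => μ y * φ y) ≤ SA + δ⁻¹ * (SA * SB) := by
      have := mul_le_mul_of_nonneg_left hCS2 hδinv
      linarith
    calc ω * (L μ + δ⁻¹ * L (fun y => μ y * φ y)) ≤ ω * (SA + δ⁻¹ * (SA * SB)) :=
          mul_le_mul_of_nonneg_left hsum hω
      _ = SA * (1 + (1/δ) * SB) * ω := by field_simp
  exact le_trans habs hfinal
end

section
/- Let (q_n)_{n≥1} be a sequence of reals with q_n ∈ (0,1) for all n, such that (q_n) converges statistically to 1 and (q_n^n) converges statistically to 1. Then [n]_{q_n} tends to infinity statistically: for every M > 0, the set {n ∈ ℕ : [n]_{q_n} ≤ M} has natural density zero. -/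
/-- The q-integer `[n]_q = ∑_{j=0}^{n-1} q^j`. -/
noncomputable def qInt (q : ℝ) (n : ℕ) : ℝ := ∑ j ∈ Finset.range n, q ^ j

open scoped Classical in
/-- A set `K ⊆ ℕ` has natural density zero if `(1/n)·#{k ≤ n : k ∈ K} → 0`. -/
def DensityZero (K : Set ℕ) : Prop :=
  Filter.Tendsto
    (fun n : ℕ => (((Finset.range (n + 1)).filter (fun k => k ∈ K)).card : ℝ) / n)
    Filter.atTop (nhds 0)

/-- A real sequence converges statistically to `L` if for every `ε > 0` the set
`{n : |x_n − L| ≥ ε}` has natural density zero. -/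
def StatTendsto (x : ℕ → ℝ) (L : ℝ) : Prop :=
  ∀ ε : ℝ, 0 < ε → DensityZero {n : ℕ | ε ≤ |x n - L|}

open scoped Classical in
/-- If `S` is contained in a density-zero set union a bounded set, then `S` has density zero. -/
lemma densityZero_of_subset_union {T S : Set ℕ} (hT : DensityZero T) (N : ℕ)
    (hS : ∀ k, k ∈ S → k ∈ T ∨ k ≤ N) : DensityZero S := by
  have hb : ∀ n : ℕ,
      (((Finset.range (n + 1)).filter (fun k => k ∈ S)).card : ℝ)
        ≤ (((Finset.range (n + 1)).filter (fun k => k ∈ T)).card : ℝ) + (N + 1) := by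
    intro n
    have hsub : (Finset.range (n + 1)).filter (fun k => k ∈ S) ⊆
        ((Finset.range (n + 1)).filter (fun k => k ∈ T)) ∪ Finset.range (N + 1) := by
      intro k hk
      simp only [Finset.mem_filter, Finset.mem_union, Finset.mem_range] at *
      rcases hS k hk.2 with h | h
      · exact Or.inl ⟨hk.1, h⟩
      · exact Or.inr (Nat.lt_succ_of_le h)
    have := (Finset.card_le_card hsub).trans (Finset.card_union_le _ _)
    have := (Nat.cast_le (α := ℝ)).2 this
    simpa using this
  have hg : Filter.Tendsto
      (fun n : ℕ => ((((Finset.range (n + 1)).filter (fun k => k ∈ T)).card : ℝ)) / n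
        + ((N : ℝ) + 1) / n) Filter.atTop (nhds 0) := by
    have h2 : Filter.Tendsto (fun n : ℕ => ((N : ℝ) + 1) / n) Filter.atTop (nhds 0) :=
      tendsto_const_div_atTop_nhds_zero_nat _
    simpa using hT.add h2
  refine tendsto_of_tendsto_of_tendsto_of_le_of_le (tendsto_const_nhds) hg ?_ ?_
  · intro n
    positivity
  · intro n
    rcases Nat.eq_zero_or_pos n with rfl | hn
    · simp
    · dsimp only
      rw [← add_div]
      exact div_le_div_of_nonneg_right (hb n) (by positivity)

/-- If `q_n ∈ (0,1)`, `q_n → 1` statistically and `q_nⁿ → 1` statistically,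
then `[n]_{q_n} → ∞` statistically: for every `M > 0` the set
`{n : [n]_{q_n} ≤ M}` has natural density zero. -/
theorem qInt_statTendsto_atTop (q : ℕ → ℝ) (hq : ∀ n : ℕ, 1 ≤ n → 0 < q n ∧ q n < 1)
    (h1 : StatTendsto q 1) (h2 : StatTendsto (fun n => q n ^ n) 1) :
    ∀ M : ℝ, 0 < M → DensityZero {n : ℕ | qInt (q n) n ≤ M} := by
  intro M hM
  have hT : DensityZero {n : ℕ | (1 : ℝ) / 2 ≤ |q n ^ n - 1|} := h2 (1 / 2) (by norm_num)
  refine densityZero_of_subset_union hT ⌈2 * M⌉₊ ?_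
  intro n hn
  by_contra hcon
  push_neg at hcon
  obtain ⟨hnT, hN⟩ := hcon
  simp only [Set.mem_setOf_eq, not_le] at hnT hn
  have hn1 : 1 ≤ n := by
    have : (0 : ℕ) < ⌈2 * M⌉₊ + 1 := Nat.succ_pos _
    omega
  obtain ⟨hq0, hq1⟩ := hq n hn1
  -- from |q n ^ n - 1| < 1/2 get q n ^ n > 1/2
  have hpow : (1 : ℝ) / 2 < q n ^ n := by
    have := (abs_lt.mp hnT).1
    linarith
  -- qInt (q n) n ≥ n * q n ^ n
  have hsum : (n : ℝ) * q n ^ n ≤ qInt (q n) n := by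
    have := Finset.card_nsmul_le_sum (Finset.range n) (fun j => q n ^ j) (q n ^ n)
      (fun j hj => pow_le_pow_of_le_one hq0.le hq1.le (Finset.mem_range.mp hj).le)
    simpa [qInt, nsmul_eq_mul] using this
  -- n > ⌈2M⌉ ≥ 2M so n/2 > M
  have hnM : 2 * M < (n : ℝ) := by
    have h1 : (2 * M : ℝ) ≤ (⌈2 * M⌉₊ : ℝ) := Nat.le_ceil _
    have h2 : ((⌈2 * M⌉₊ : ℕ) : ℝ) < (n : ℝ) := by exact_mod_cast hN
    linarith
  have : (n : ℝ) / 2 < (n : ℝ) * q n ^ n := by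
    have hnpos : (0 : ℝ) < n := by exact_mod_cast hn1
    nlinarith
  linarith
end
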